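/- Let r₁, r₂ > 0. Then λ₁(ε) ∼ 1 as ε → 0⁺; that is, there exist constants 0 < m ≤ M and ε₀ > 0 such that m ≤ λ₁(ε) ≤ M for all 0 < ε < ε₀. -/

import Mathlib

open Real Filter Topology

/-- Half-distance between the fixed points of the composed reflections. -/
noncomputable def alphaBi (r₁ r₂ ε : ℝ) : ℝ :=
  Real.sqrt (ε * (2 * r₁ + ε) * (2 * r₂ + ε) * (2 * r₁ + 2 * r₂ + ε)) /
    (2 * (r₁ + r₂ + ε))

/-- Bispherical coordinate of the boundary of the first sphere. -/
noncomputable def xi1 (r₁ r₂ ε : ℝ) : ℝ := Real.arsinh (alphaBi r₁ r₂ ε / r₁)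

/-- Bispherical coordinate of the boundary of the second sphere. -/
noncomputable def xi2 (r₁ r₂ ε : ℝ) : ℝ := Real.arsinh (alphaBi r₁ r₂ ε / r₂)

/-- Capacitance coefficient C₁₁. -/
noncomputable def C11 (r₁ r₂ ε : ℝ) : ℝ :=
  8 * π * alphaBi r₁ r₂ ε *
    ∑' n : ℕ, Real.exp ((2 * n + 1) * xi2 r₁ r₂ ε) /
      (Real.exp ((2 * n + 1) * (xi1 r₁ r₂ ε + xi2 r₁ r₂ ε)) - 1)

/-- Capacitance coefficient C₂₂. -/
noncomputable def C22 (r₁ r₂ ε : ℝ) : ℝ :=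
  8 * π * alphaBi r₁ r₂ ε *
    ∑' n : ℕ, Real.exp ((2 * n + 1) * xi1 r₁ r₂ ε) /
      (Real.exp ((2 * n + 1) * (xi1 r₁ r₂ ε + xi2 r₁ r₂ ε)) - 1)

/-- Capacitance coefficient C₁₂. -/
noncomputable def C12 (r₁ r₂ ε : ℝ) : ℝ :=
  -(8 * π * alphaBi r₁ r₂ ε *
    ∑' n : ℕ, 1 / (Real.exp ((2 * n + 1) * (xi1 r₁ r₂ ε + xi2 r₁ r₂ ε)) - 1))

/-- Capacitance coefficient C₂₁. -/
noncomputable def C21 (r₁ r₂ ε : ℝ) : ℝ := C12 r₁ r₂ ε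

/-- Rescaled capacitance coefficient C̃₁₁ = (3/(4π r₁³)) C₁₁. -/
noncomputable def Ct11 (r₁ r₂ ε : ℝ) : ℝ := 3 / (4 * π * r₁ ^ 3) * C11 r₁ r₂ ε

/-- Rescaled capacitance coefficient C̃₂₂ = (3/(4π r₂³)) C₂₂. -/
noncomputable def Ct22 (r₁ r₂ ε : ℝ) : ℝ := 3 / (4 * π * r₂ ^ 3) * C22 r₁ r₂ ε

/-- Rescaled capacitance coefficient C̃₁₂ = (3/(4π r₁³)) C₁₂. -/
noncomputable def Ct12 (r₁ r₂ ε : ℝ) : ℝ := 3 / (4 * π * r₁ ^ 3) * C12 r₁ r₂ ε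

/-- Rescaled capacitance coefficient C̃₂₁ = (3/(4π r₂³)) C₂₁. -/
noncomputable def Ct21 (r₁ r₂ ε : ℝ) : ℝ := 3 / (4 * π * r₂ ^ 3) * C21 r₁ r₂ ε

/-- Smaller eigenvalue of the rescaled capacitance matrix. -/
noncomputable def lam1 (r₁ r₂ ε : ℝ) : ℝ :=
  1 / 2 * (Ct11 r₁ r₂ ε + Ct22 r₁ r₂ ε -
    Real.sqrt ((Ct11 r₁ r₂ ε - Ct22 r₁ r₂ ε) ^ 2 + 4 * Ct12 r₁ r₂ ε * Ct21 r₁ r₂ ε))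

/-- Larger eigenvalue of the rescaled capacitance matrix. -/
noncomputable def lam2 (r₁ r₂ ε : ℝ) : ℝ :=
  1 / 2 * (Ct11 r₁ r₂ ε + Ct22 r₁ r₂ ε +
    Real.sqrt ((Ct11 r₁ r₂ ε - Ct22 r₁ r₂ ε) ^ 2 + 4 * Ct12 r₁ r₂ ε * Ct21 r₁ r₂ ε))

/- ########################  auxiliary lemmas  ######################## -/

lemma my_le_exp_sub_one {x : ℝ} : x ≤ Real.exp x - 1 := by
  linarith [Real.add_one_le_exp x]

lemma my_exp_sub_one_le {x : ℝ} (hx : 0 ≤ x) : Real.exp x - 1 ≤ x * Real.exp x := by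
  have h := Real.add_one_le_exp (-x)
  rw [Real.exp_neg] at h
  have h2 := mul_le_mul_of_nonneg_right h (Real.exp_pos x).le
  rw [inv_mul_cancel₀ (Real.exp_pos x).ne'] at h2
  nlinarith [Real.exp_pos x]

lemma my_one_sub_exp_neg {t : ℝ} : t * Real.exp (-t) ≤ 1 - Real.exp (-t) := by
  have h := Real.add_one_le_exp t
  have h2 := mul_le_mul_of_nonneg_right h (Real.exp_pos (-t)).le
  rw [← Real.exp_add] at h2
  simp only [add_neg_cancel, Real.exp_zero] at h2
  linarith

lemma my_exp_pos_den {d : ℝ} (hd : 0 < d) (n : ℕ) :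
    0 < Real.exp ((2 * n + 1) * d) - 1 := by
  have h1 : (0:ℝ) < (2 * (n:ℝ) + 1) * d := by positivity
  linarith [my_le_exp_sub_one (x := (2 * (n:ℝ) + 1) * d)]

lemma my_ratio_nonneg {a c : ℝ} (ha : 0 ≤ a) (hc : 0 < c) (n : ℕ) :
    0 ≤ (Real.exp ((2 * n + 1) * a) - 1) / (Real.exp ((2 * n + 1) * (a + c)) - 1) := by
  apply div_nonneg
  · have : (0:ℝ) ≤ (2 * (n:ℝ) + 1) * a := by positivity
    linarith [my_le_exp_sub_one (x := (2 * (n:ℝ) + 1) * a)]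
  · exact (my_exp_pos_den (by linarith) n).le

lemma my_ratio_le_pow {a c : ℝ} (ha : 0 ≤ a) (hc : 0 < c) (n : ℕ) :
    (Real.exp ((2 * n + 1) * a) - 1) / (Real.exp ((2 * n + 1) * (a + c)) - 1) ≤
      Real.exp (-(2 * c)) ^ n := by
  set k : ℝ := 2 * (n:ℝ) + 1 with hk
  have hkn : (0:ℝ) ≤ (n:ℝ) := Nat.cast_nonneg n
  have hden := my_exp_pos_den (show (0:ℝ) < a + c by linarith) n
  have step1 : (Real.exp (k * a) - 1) / (Real.exp (k * (a + c)) - 1) ≤ Real.exp (-(k * c)) := by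
    rw [div_le_iff₀ hden]
    have harg : -(k * c) + k * (a + c) = k * a := by ring
    have hexp : Real.exp (-(k * c)) * (Real.exp (k * (a + c)) - 1)
        = Real.exp (k * a) - Real.exp (-(k * c)) := by
      rw [mul_sub, mul_one, ← Real.exp_add, harg]
    rw [hexp]
    have : Real.exp (-(k * c)) ≤ 1 := Real.exp_le_one_iff.mpr (by nlinarith)
    linarith
  have step2 : Real.exp (-(k * c)) ≤ Real.exp (-(2 * c)) ^ n := by
    rw [← Real.exp_nat_mul]
    apply Real.exp_le_exp.mpr
    have harg2 : (n:ℝ) * -(2 * c) = -(2 * (n:ℝ) * c) := by ring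
    rw [harg2, hk]
    nlinarith
  exact step1.trans step2

lemma my_summable_ratio {a c : ℝ} (ha : 0 ≤ a) (hc : 0 < c) :
    Summable (fun n : ℕ =>
      (Real.exp ((2 * n + 1) * a) - 1) / (Real.exp ((2 * n + 1) * (a + c)) - 1)) := by
  have hr0 : (0:ℝ) ≤ Real.exp (-(2 * c)) := (Real.exp_pos _).le
  have hr1 : Real.exp (-(2 * c)) < 1 := Real.exp_lt_one_iff.mpr (by linarith)
  exact Summable.of_nonneg_of_le (fun n => my_ratio_nonneg ha hc n)
    (fun n => my_ratio_le_pow ha hc n) (summable_geometric_of_lt_one hr0 hr1)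

lemma my_T0_le_pow {d : ℝ} (hd : 0 < d) (n : ℕ) :
    1 / (Real.exp ((2 * n + 1) * d) - 1) ≤ (Real.exp d - 1)⁻¹ * Real.exp (-(2 * d)) ^ n := by
  have hd1 : 0 < Real.exp d - 1 := by
    linarith [my_le_exp_sub_one (x := d)]
  have hE : (0:ℝ) < Real.exp ((2 * (n:ℝ)) * d) := Real.exp_pos _
  have h1 : (Real.exp d - 1) * Real.exp ((2 * (n:ℝ)) * d) ≤ Real.exp ((2 * n + 1) * d) - 1 := by
    have hexp : Real.exp ((2 * (n:ℝ) + 1) * d) = Real.exp ((2 * (n:ℝ)) * d) * Real.exp d := by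
      rw [← Real.exp_add]; congr 1; ring
    have h0 : (1:ℝ) ≤ Real.exp ((2 * (n:ℝ)) * d) := Real.one_le_exp (by positivity)
    nlinarith
  have h2 : 1 / (Real.exp ((2 * n + 1) * d) - 1)
      ≤ 1 / ((Real.exp d - 1) * Real.exp ((2 * (n:ℝ)) * d)) := by
    apply one_div_le_one_div_of_le (by positivity) h1
  have h3 : Real.exp (-(2 * d)) ^ n = (Real.exp ((2 * (n:ℝ)) * d))⁻¹ := by
    rw [← Real.exp_nat_mul, ← Real.exp_neg]
    congr 1; ring
  rw [h3, ← mul_inv, ← one_div]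
  exact h2

lemma my_summable_T0 {d : ℝ} (hd : 0 < d) :
    Summable (fun n : ℕ => 1 / (Real.exp ((2 * n + 1) * d) - 1)) := by
  have hr0 : (0:ℝ) ≤ Real.exp (-(2 * d)) := (Real.exp_pos _).le
  have hr1 : Real.exp (-(2 * d)) < 1 := Real.exp_lt_one_iff.mpr (by linarith)
  exact Summable.of_nonneg_of_le
    (fun n => (div_pos one_pos (my_exp_pos_den hd n)).le)
    (fun n => my_T0_le_pow hd n)
    ((summable_geometric_of_lt_one hr0 hr1).mul_left _)

lemma my_quarter_le_exp_neg {t : ℝ} (ht : t ≤ 1) : (1:ℝ)/4 ≤ Real.exp (-t) := by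
  have h1 : Real.exp (-1) ≤ Real.exp (-t) := Real.exp_le_exp.mpr (by linarith)
  have h2 : Real.exp 1 < 4 := by nlinarith [Real.exp_one_lt_d9]
  have h3 : (1:ℝ)/4 ≤ Real.exp (-1) := by
    rw [Real.exp_neg, one_div]
    exact inv_anti₀ (Real.exp_pos 1) h2.le
  linarith

lemma my_ratio_tsum_le {a c : ℝ} (ha : 0 ≤ a) (hc : 0 < c) (hc2 : c ≤ 1/2) :
    ∑' n : ℕ, (Real.exp ((2 * n + 1) * a) - 1) / (Real.exp ((2 * n + 1) * (a + c)) - 1)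
      ≤ 2 / c := by
  have hr0 : (0:ℝ) ≤ Real.exp (-(2 * c)) := (Real.exp_pos _).le
  have hr1 : Real.exp (-(2 * c)) < 1 := Real.exp_lt_one_iff.mpr (by linarith)
  have h1 := Summable.tsum_le_tsum (fun n => my_ratio_le_pow ha hc n) (my_summable_ratio ha hc)
    (summable_geometric_of_lt_one hr0 hr1)
  rw [tsum_geometric_of_lt_one hr0 hr1] at h1
  have h2 : c / 2 ≤ 1 - Real.exp (-(2 * c)) := by
    have h3 := my_one_sub_exp_neg (t := 2 * c)
    have h4 := my_quarter_le_exp_neg (t := 2 * c) (by linarith)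
    nlinarith
  have h5 : (1 - Real.exp (-(2 * c)))⁻¹ ≤ 2 / c := by
    rw [show (2:ℝ)/c = (c/2)⁻¹ by rw [inv_div]]
    exact inv_anti₀ (by positivity) h2
  exact h1.trans h5

lemma my_ratio_tsum_ge {a c : ℝ} (ha : 0 < a) (hc : 0 < c) (hb2 : a + c ≤ 1/2) :
    a / (10 * (a + c)^2)
      ≤ ∑' n : ℕ, (Real.exp ((2 * n + 1) * a) - 1) / (Real.exp ((2 * n + 1) * (a + c)) - 1) := by
  set b := a + c with hbdef
  have hb : 0 < b := by positivity
  set N : ℕ := ⌊1 / (2 * b)⌋₊ with hN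
  have hNle : (N:ℝ) ≤ 1 / (2 * b) := Nat.floor_le (by positivity)
  have hNgt : 1 / (2 * b) < (N:ℝ) + 1 := Nat.lt_floor_add_one _
  have hterm : ∀ n ∈ Finset.range (N + 1),
      a / (5 * b) ≤ (Real.exp ((2 * n + 1) * a) - 1) / (Real.exp ((2 * n + 1) * b) - 1) := by
    intro n hn
    have hnN : (n:ℝ) ≤ (N:ℝ) := by
      exact_mod_cast Nat.lt_succ_iff.mp (Finset.mem_range.mp hn)
    have hkb : (2 * (n:ℝ) + 1) * b ≤ 3 / 2 := by
      have h1 : (2 * (n:ℝ) + 1) * b ≤ (2 * (N:ℝ) + 1) * b := by nlinarith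
      have h2 : (N:ℝ) * b ≤ 1 / 2 := by
        have h2a := mul_le_mul_of_nonneg_right hNle hb.le
        have h2b : 1 / (2 * b) * b = 1 / 2 := by field_simp
        linarith
      nlinarith
    have hden : Real.exp ((2 * n + 1) * b) - 1 ≤ 5 * ((2 * (n:ℝ) + 1) * b) := by
      have h3 := my_exp_sub_one_le (x := (2 * (n:ℝ) + 1) * b) (by positivity)
      have h4 : Real.exp ((2 * (n:ℝ) + 1) * b) ≤ Real.exp (3/2) :=
        Real.exp_le_exp.mpr hkb
      have h5 : Real.exp (3/2) < 5 := by
        have hsq : Real.exp (3/2) * Real.exp (3/2) = Real.exp 1 * Real.exp 1 * Real.exp 1 := by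
          rw [← Real.exp_add, ← Real.exp_add, ← Real.exp_add]; norm_num
        nlinarith [Real.exp_pos (3/2), Real.exp_one_lt_d9, Real.exp_pos 1]
      nlinarith [Real.exp_pos ((2 * (n:ℝ) + 1) * b),
        mul_pos (show (0:ℝ) < 2 * (n:ℝ) + 1 by positivity) hb]
    have hnum : (2 * (n:ℝ) + 1) * a ≤ Real.exp ((2 * n + 1) * a) - 1 :=
      my_le_exp_sub_one
    have heq : a / (5 * b) = (2 * (n:ℝ) + 1) * a / (5 * ((2 * (n:ℝ) + 1) * b)) := by
      rw [div_eq_div_iff (by positivity) (by positivity)]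
      ring
    rw [heq]
    exact div_le_div₀ ((by positivity : (0:ℝ) ≤ (2 * (n:ℝ) + 1) * a).trans hnum)
      hnum (my_exp_pos_den hb n) hden
  have hsum := Finset.card_nsmul_le_sum (Finset.range (N + 1)) _ _ hterm
  rw [Finset.card_range, nsmul_eq_mul] at hsum
  have hpartial := Summable.sum_le_tsum (Finset.range (N + 1))
    (fun n _ => my_ratio_nonneg ha.le hc n) (my_summable_ratio ha.le hc)
  have hcount : a / (10 * b^2) ≤ ((N:ℝ) + 1) * (a / (5 * b)) := by
    have h6 : 1 / (2 * b) * (a / (5 * b)) ≤ ((N:ℝ) + 1) * (a / (5 * b)) :=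
      mul_le_mul_of_nonneg_right hNgt.le (by positivity)
    have e1 : 1 / (2 * b) * (a / (5 * b)) = a / (10 * b^2) := by
      rw [div_mul_div_comm, one_mul]
      congr 1; ring
    linarith
  have hlast : ((N:ℝ) + 1) * (a / (5 * b)) ≤ ∑' n : ℕ,
      (Real.exp ((2 * n + 1) * a) - 1) / (Real.exp ((2 * n + 1) * b) - 1) := by
    push_cast at hsum ⊢
    exact hsum.trans hpartial
  exact hcount.trans hlast

lemma my_T0_ge {d : ℝ} (hd : 0 < d) (hd2 : d ≤ 1/2) :
    1 / (2 * d) ≤ ∑' n : ℕ, 1 / (Real.exp ((2 * n + 1) * d) - 1) := by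
  have h0 := Summable.le_tsum (my_summable_T0 hd) 0
    (fun j _ => (div_pos one_pos (my_exp_pos_den hd j)).le)
  have hval : (1:ℝ) / (Real.exp ((2 * (0:ℕ) + 1) * d) - 1) = 1 / (Real.exp d - 1) := by
    norm_num
  rw [hval] at h0
  have h1 : Real.exp d - 1 ≤ 2 * d := by
    have h2 := my_exp_sub_one_le (x := d) hd.le
    have h3 : Real.exp d ≤ Real.exp (1/2) := Real.exp_le_exp.mpr hd2
    have h4 : Real.exp (1/2) < 2 := by
      have hsq : Real.exp (1/2) * Real.exp (1/2) = Real.exp 1 := by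
        rw [← Real.exp_add]; norm_num
      nlinarith [Real.exp_pos (1/2), Real.exp_one_lt_d9]
    nlinarith
  have h5 : 1 / (2 * d) ≤ 1 / (Real.exp d - 1) :=
    one_div_le_one_div_of_le (by linarith [my_le_exp_sub_one (x := d)]) h1
  exact h5.trans h0

lemma my_arsinh_le_self {x : ℝ} (hx : 0 ≤ x) : Real.arsinh x ≤ x := by
  have h := Real.self_le_sinh_iff.mpr (Real.arsinh_nonneg_iff.mpr hx)
  rwa [Real.sinh_arsinh] at h

lemma my_half_le_arsinh {x : ℝ} (h0 : 0 ≤ x) (h1 : x ≤ 1) : x / 2 ≤ Real.arsinh x := by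
  have harx : Real.arsinh x = Real.log (x + √(1 + x ^ 2)) := rfl
  have hsq : (1:ℝ) ≤ √(1 + x ^ 2) := by
    have := Real.sqrt_le_sqrt (show (1:ℝ) ≤ 1 + x ^ 2 by nlinarith)
    rwa [Real.sqrt_one] at this
  have h2 : Real.log (1 + x) ≤ Real.arsinh x := by
    rw [harx]
    exact Real.log_le_log (by linarith) (by linarith)
  have h3 : x / 2 ≤ Real.log (1 + x) := by
    have hx1 : (0:ℝ) < 1 + x := by linarith
    have hlog := Real.log_le_sub_one_of_pos (show 0 < (1 + x)⁻¹ by positivity)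
    rw [Real.log_inv] at hlog
    have heq : 1 - (1 + x)⁻¹ = x / (1 + x) := by field_simp; ring
    have h4 : x / 2 ≤ x / (1 + x) :=
      div_le_div_of_nonneg_left h0 (by linarith) (by linarith)
    linarith
  linarith

lemma my_lam_bounds {a d b c : ℝ} (ha : 0 < a) (hdpos : 0 < d) (hbc : 0 ≤ b * c)
    (hdet : b * c ≤ a * d) :
    (a * d - b * c) / (a + d) ≤ 1 / 2 * (a + d - Real.sqrt ((a - d) ^ 2 + 4 * b * c)) ∧
    1 / 2 * (a + d - Real.sqrt ((a - d) ^ 2 + 4 * b * c)) ≤ 2 * (a * d - b * c) / (a + d) := by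
  have had : 0 < a + d := by linarith
  set s := Real.sqrt ((a - d) ^ 2 + 4 * b * c) with hs
  have hsnn : 0 ≤ s := Real.sqrt_nonneg _
  have hs2 : s ^ 2 = (a - d) ^ 2 + 4 * b * c :=
    Real.sq_sqrt (by nlinarith [sq_nonneg (a - d)])
  have hsle : s ≤ a + d := by nlinarith [sq_nonneg (a + d - s)]
  constructor
  · have key : (a + d) * s ≤ a ^ 2 + d ^ 2 + 2 * (b * c) := by
      have h1 : (a - d) ^ 2 + 4 * b * c ≤ ((a ^ 2 + d ^ 2 + 2 * (b * c)) / (a + d)) ^ 2 := by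
        rw [div_pow, le_div_iff₀ (by positivity)]
        nlinarith [sq_nonneg (2 * (a * d) - 2 * (b * c))]
      have h2 : s ≤ (a ^ 2 + d ^ 2 + 2 * (b * c)) / (a + d) :=
        (Real.sqrt_le_sqrt h1).trans_eq (Real.sqrt_sq (div_nonneg (by nlinarith) had.le))
      rw [le_div_iff₀ had] at h2
      nlinarith
    rw [div_le_iff₀ had]
    nlinarith
  · rw [le_div_iff₀ had]
    nlinarith [mul_nonneg hsnn (sub_nonneg.mpr hsle)]

lemma my_scalar_low {S A B cmin Cmax k₁ k₂ : ℝ} (hk₁ : 0 < k₁) (hk₂ : 0 < k₂)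
    (hc : 0 < cmin) (hS : 0 ≤ S) (hA1 : cmin ≤ A) (hA2 : A ≤ Cmax)
    (hB1 : cmin ≤ B) (hB2 : B ≤ Cmax) :
    cmin ^ 2 * ((k₁ + k₂) * S + k₁ * A + k₂ * B)
      ≤ Cmax * (k₁ + k₂) * (S * (A + B) + A * B) := by
  have h1 : cmin ^ 2 ≤ Cmax * A := by nlinarith
  have h2 : cmin ^ 2 ≤ Cmax * B := by nlinarith
  nlinarith [mul_le_mul_of_nonneg_right h1 (mul_nonneg (by linarith : (0:ℝ) ≤ k₁ + k₂) hS),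
    mul_le_mul_of_nonneg_right h2 (mul_nonneg hk₁.le (by linarith : (0:ℝ) ≤ A)),
    mul_le_mul_of_nonneg_right h1 (mul_nonneg hk₂.le (by linarith : (0:ℝ) ≤ B)),
    mul_nonneg (mul_nonneg (by linarith : (0:ℝ) ≤ Cmax) (by linarith : (0:ℝ) ≤ k₁ + k₂))
      (mul_nonneg hS (by linarith : (0:ℝ) ≤ B))]

noncomputable def myk (r : ℝ) : ℝ := 3 / (4 * π * r ^ 3)

noncomputable def mySm (r₁ r₂ : ℝ) : ℝ := 4 * π / (1 / r₁ + 1 / r₂)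

noncomputable def mycmin (r₁ r₂ : ℝ) : ℝ :=
  min (2 * π / (5 * r₂ * (1 / r₁ + 1 / r₂) ^ 2)) (2 * π / (5 * r₁ * (1 / r₁ + 1 / r₂) ^ 2))

noncomputable def myCmax (r₁ r₂ : ℝ) : ℝ := max (32 * π * r₁) (32 * π * r₂)

noncomputable def mym (r₁ r₂ : ℝ) : ℝ :=
  myk r₁ * myk r₂ * mycmin r₁ r₂ ^ 2 / ((myk r₁ + myk r₂) * myCmax r₁ r₂)

noncomputable def myM (r₁ r₂ : ℝ) : ℝ :=
  2 * myk r₁ * myk r₂ / (myk r₁ + myk r₂) *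
    (32 * π * r₁ + 32 * π * r₂ + 32 * π * r₁ * (32 * π * r₂) / mySm r₁ r₂)

set_option maxHeartbeats 1000000 in
lemma my_core {S A B k₁ k₂ cmin Cmax Ap Bp Sm a d b c : ℝ}
    (hk₁ : 0 < k₁) (hk₂ : 0 < k₂) (hcmin : 0 < cmin) (hSm : 0 < Sm) (hS : Sm ≤ S)
    (hA1 : cmin ≤ A) (hA2 : A ≤ Ap) (hB1 : cmin ≤ B) (hB2 : B ≤ Bp)
    (hAc : Ap ≤ Cmax) (hBc : Bp ≤ Cmax)
    (ha : a = k₁ * (S + A)) (hd : d = k₂ * (S + B))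
    (hb : b = -(k₁ * S)) (hc : c = -(k₂ * S)) :
    k₁ * k₂ * cmin ^ 2 / ((k₁ + k₂) * Cmax)
        ≤ 1 / 2 * (a + d - Real.sqrt ((a - d) ^ 2 + 4 * b * c)) ∧
    1 / 2 * (a + d - Real.sqrt ((a - d) ^ 2 + 4 * b * c))
        ≤ 2 * k₁ * k₂ / (k₁ + k₂) * (Ap + Bp + Ap * Bp / Sm) := by
  have hSpos : 0 < S := lt_of_lt_of_le hSm hS
  have hApos : 0 < A := lt_of_lt_of_le hcmin hA1
  have hBpos : 0 < B := lt_of_lt_of_le hcmin hB1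
  have hCmax : 0 < Cmax := lt_of_lt_of_le hApos (hA2.trans hAc)
  have hapos : 0 < a := by rw [ha]; exact mul_pos hk₁ (by linarith)
  have hdpos : 0 < d := by rw [hd]; exact mul_pos hk₂ (by linarith)
  have hbc : 0 ≤ b * c := by
    rw [hb, hc]
    nlinarith [mul_nonneg (mul_nonneg hk₁.le hk₂.le) (mul_nonneg hSpos.le hSpos.le)]
  have hdet : b * c ≤ a * d := by
    rw [ha, hd, hb, hc]
    nlinarith [mul_nonneg (mul_nonneg hk₁.le hk₂.le) (mul_nonneg hSpos.le hApos.le),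
      mul_nonneg (mul_nonneg hk₁.le hk₂.le) (mul_nonneg hSpos.le hBpos.le),
      mul_nonneg (mul_nonneg hk₁.le hk₂.le) (mul_nonneg hApos.le hBpos.le)]
  obtain ⟨hlow, hup⟩ := my_lam_bounds hapos hdpos hbc hdet
  have hsum_pos : 0 < a + d := by linarith
  constructor
  · refine le_trans ?_ hlow
    rw [div_le_div_iff₀ (mul_pos (by linarith) hCmax) hsum_pos]
    have hsc := my_scalar_low hk₁ hk₂ hcmin hSpos.le hA1 (hA2.trans hAc) hB1 (hB2.trans hBc)
    rw [ha, hd, hb, hc]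
    nlinarith [mul_le_mul_of_nonneg_left hsc (mul_nonneg hk₁.le hk₂.le)]
  · refine hup.trans ?_
    have hnum : 0 ≤ 2 * (a * d - b * c) := by nlinarith
    have h1 : 2 * (a * d - b * c) / (a + d) ≤ 2 * (a * d - b * c) / ((k₁ + k₂) * S) := by
      apply div_le_div_of_nonneg_left hnum (mul_pos (by linarith) hSpos)
      rw [ha, hd]; nlinarith
    have h2 : 2 * (a * d - b * c) / ((k₁ + k₂) * S)
        = 2 * k₁ * k₂ / (k₁ + k₂) * (A + B + A * B / S) := by
      rw [ha, hd, hb, hc]; field_simp; ring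
    have h3 : 2 * k₁ * k₂ / (k₁ + k₂) * (A + B + A * B / S)
        ≤ 2 * k₁ * k₂ / (k₁ + k₂) * (Ap + Bp + Ap * Bp / Sm) := by
      apply mul_le_mul_of_nonneg_left ?_
        (le_of_lt (div_pos (by nlinarith [mul_pos hk₁ hk₂]) (by linarith)))
      have h4 : A * B / S ≤ Ap * Bp / Sm :=
        div_le_div₀ (mul_nonneg (by linarith) (by linarith))
          (mul_le_mul hA2 hB2 hBpos.le (by linarith)) hSm hS
      linarith
    rw [h2] at h1
    exact h1.trans h3

set_option maxHeartbeats 1600000 in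
lemma my_key (r₁ r₂ : ℝ) (hr₁ : 0 < r₁) (hr₂ : 0 < r₂) (ε : ℝ)
    (hα0 : 0 < alphaBi r₁ r₂ ε)
    (hαδ : alphaBi r₁ r₂ ε ≤ r₁ * r₂ / (2 * (r₁ + r₂))) :
    mym r₁ r₂ ≤ lam1 r₁ r₂ ε ∧ lam1 r₁ r₂ ε ≤ myM r₁ r₂ := by
  have hπ := Real.pi_pos
  set α := alphaBi r₁ r₂ ε with hαdef
  set σ := 1 / r₁ + 1 / r₂ with hσ
  have hσpos : 0 < σ := by
    rw [hσ]; exact add_pos (one_div_pos.mpr hr₁) (one_div_pos.mpr hr₂)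
  have hrr : 0 < r₁ + r₂ := by linarith
  have hδσ : r₁ * r₂ / (2 * (r₁ + r₂)) * σ = 1 / 2 := by
    rw [hσ]; field_simp; ring
  have hα1 : α ≤ r₁ / 2 := by
    have h : r₁ * r₂ / (2 * (r₁ + r₂)) ≤ r₁ / 2 := by
      rw [div_le_div_iff₀ (by linarith) (by norm_num)]
      nlinarith
    linarith
  have hα2 : α ≤ r₂ / 2 := by
    have h : r₁ * r₂ / (2 * (r₁ + r₂)) ≤ r₂ / 2 := by
      rw [div_le_div_iff₀ (by linarith) (by norm_num)]
      nlinarith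
    linarith
  have hασ : α * σ ≤ 1 / 2 := by
    have h := mul_le_mul_of_nonneg_right hαδ hσpos.le
    linarith [hδσ]
  -- xi bounds
  set ξ₁ := xi1 r₁ r₂ ε with hξ₁def
  set ξ₂ := xi2 r₁ r₂ ε with hξ₂def
  have hξ₁eq : ξ₁ = Real.arsinh (α / r₁) := rfl
  have hξ₂eq : ξ₂ = Real.arsinh (α / r₂) := rfl
  have hx1 : (0:ℝ) ≤ α / r₁ := (div_pos hα0 hr₁).le
  have hx2 : (0:ℝ) ≤ α / r₂ := (div_pos hα0 hr₂).le
  have hx1' : α / r₁ ≤ 1 := by rw [div_le_one hr₁]; linarith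
  have hx2' : α / r₂ ≤ 1 := by rw [div_le_one hr₂]; linarith
  have hξ₁u : ξ₁ ≤ α / r₁ := by rw [hξ₁eq]; exact my_arsinh_le_self hx1
  have hξ₂u : ξ₂ ≤ α / r₂ := by rw [hξ₂eq]; exact my_arsinh_le_self hx2
  have hξ₁l : α / (2 * r₁) ≤ ξ₁ := by
    have h := my_half_le_arsinh hx1 hx1'
    rw [hξ₁eq]
    have e : α / (2 * r₁) = α / r₁ / 2 := by ring
    rw [e]; exact h
  have hξ₂l : α / (2 * r₂) ≤ ξ₂ := by
    have h := my_half_le_arsinh hx2 hx2'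
    rw [hξ₂eq]
    have e : α / (2 * r₂) = α / r₂ / 2 := by ring
    rw [e]; exact h
  have hξ₁pos : 0 < ξ₁ := lt_of_lt_of_le (div_pos hα0 (by linarith)) hξ₁l
  have hξ₂pos : 0 < ξ₂ := lt_of_lt_of_le (div_pos hα0 (by linarith)) hξ₂l
  have hbu : ξ₁ + ξ₂ ≤ α * σ := by
    have e : α * σ = α / r₁ + α / r₂ := by rw [hσ]; ring
    calc ξ₁ + ξ₂ ≤ α / r₁ + α / r₂ := add_le_add hξ₁u hξ₂u
      _ = α * σ := e.symm
  have hbhalf : ξ₁ + ξ₂ ≤ 1 / 2 := hbu.trans hασ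
  have hbpos : 0 < ξ₁ + ξ₂ := by linarith
  -- series facts (raw)
  have hcomm : ξ₂ + ξ₁ = ξ₁ + ξ₂ := add_comm _ _
  have hsT0 : Summable (fun n : ℕ => 1 / (Real.exp ((2 * n + 1) * (ξ₁ + ξ₂)) - 1)) :=
    my_summable_T0 hbpos
  have hsD1 : Summable (fun n : ℕ =>
      (Real.exp ((2 * n + 1) * ξ₂) - 1) / (Real.exp ((2 * n + 1) * (ξ₁ + ξ₂)) - 1)) := by
    have h := my_summable_ratio (a := ξ₂) (c := ξ₁) hξ₂pos.le hξ₁pos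
    rwa [hcomm] at h
  have hsD2 : Summable (fun n : ℕ =>
      (Real.exp ((2 * n + 1) * ξ₁) - 1) / (Real.exp ((2 * n + 1) * (ξ₁ + ξ₂)) - 1)) :=
    my_summable_ratio (a := ξ₁) (c := ξ₂) hξ₁pos.le hξ₂pos
  have hT0l : 1 / (2 * (ξ₁ + ξ₂))
      ≤ ∑' n : ℕ, 1 / (Real.exp ((2 * n + 1) * (ξ₁ + ξ₂)) - 1) := my_T0_ge hbpos hbhalf
  have hD1l : ξ₂ / (10 * (ξ₁ + ξ₂) ^ 2) ≤ ∑' n : ℕ,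
      (Real.exp ((2 * n + 1) * ξ₂) - 1) / (Real.exp ((2 * n + 1) * (ξ₁ + ξ₂)) - 1) := by
    have h := my_ratio_tsum_ge (a := ξ₂) (c := ξ₁) hξ₂pos hξ₁pos (by linarith)
    rwa [hcomm] at h
  have hD1u : (∑' n : ℕ,
      (Real.exp ((2 * n + 1) * ξ₂) - 1) / (Real.exp ((2 * n + 1) * (ξ₁ + ξ₂)) - 1)) ≤ 2 / ξ₁ := by
    have h := my_ratio_tsum_le (a := ξ₂) (c := ξ₁) hξ₂pos.le hξ₁pos (by linarith)
    rwa [hcomm] at h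
  have hD2l : ξ₁ / (10 * (ξ₁ + ξ₂) ^ 2) ≤ ∑' n : ℕ,
      (Real.exp ((2 * n + 1) * ξ₁) - 1) / (Real.exp ((2 * n + 1) * (ξ₁ + ξ₂)) - 1) :=
    my_ratio_tsum_ge (a := ξ₁) (c := ξ₂) hξ₁pos hξ₂pos (by linarith)
  have hD2u : (∑' n : ℕ,
      (Real.exp ((2 * n + 1) * ξ₁) - 1) / (Real.exp ((2 * n + 1) * (ξ₁ + ξ₂)) - 1)) ≤ 2 / ξ₂ :=
    my_ratio_tsum_le (a := ξ₁) (c := ξ₂) hξ₁pos.le hξ₂pos (by linarith)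
  -- abbreviate the series
  set T0 := ∑' n : ℕ, 1 / (Real.exp ((2 * n + 1) * (ξ₁ + ξ₂)) - 1) with hT0def
  set D1 := ∑' n : ℕ,
    (Real.exp ((2 * n + 1) * ξ₂) - 1) / (Real.exp ((2 * n + 1) * (ξ₁ + ξ₂)) - 1) with hD1def
  set D2 := ∑' n : ℕ,
    (Real.exp ((2 * n + 1) * ξ₁) - 1) / (Real.exp ((2 * n + 1) * (ξ₁ + ξ₂)) - 1) with hD2def
  have hU1 : (∑' n : ℕ, Real.exp ((2 * n + 1) * ξ₂) /
      (Real.exp ((2 * n + 1) * (ξ₁ + ξ₂)) - 1)) = D1 + T0 := by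
    rw [hD1def, hT0def, ← Summable.tsum_add hsD1 hsT0]
    apply tsum_congr; intro n
    rw [← add_div, sub_add_cancel]
  have hU2 : (∑' n : ℕ, Real.exp ((2 * n + 1) * ξ₁) /
      (Real.exp ((2 * n + 1) * (ξ₁ + ξ₂)) - 1)) = D2 + T0 := by
    rw [hD2def, hT0def, ← Summable.tsum_add hsD2 hsT0]
    apply tsum_congr; intro n
    rw [← add_div, sub_add_cancel]
  -- bounds for the rescaled series
  have h8 : (0:ℝ) ≤ 8 * π * α := by
    have : (0:ℝ) < 8 * π := by positivity
    nlinarith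
  have hSl : 4 * π / σ ≤ 8 * π * α * T0 := by
    have s0 : 0 < 2 * (ξ₁ + ξ₂) := by linarith
    have s1 : 1 / (2 * (α * σ)) ≤ 1 / (2 * (ξ₁ + ξ₂)) :=
      one_div_le_one_div_of_le s0 (by linarith)
    have s2 := mul_le_mul_of_nonneg_left (s1.trans hT0l) h8
    have e : 8 * π * α * (1 / (2 * (α * σ))) = 4 * π / σ := by
      field_simp; ring
    rw [e] at s2; exact s2
  have hAl : 2 * π / (5 * r₂ * σ ^ 2) ≤ 8 * π * α * D1 := by
    have d0 : 0 < 10 * (ξ₁ + ξ₂) ^ 2 := by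
      have := pow_pos hbpos 2; linarith
    have d1 : 10 * (ξ₁ + ξ₂) ^ 2 ≤ 10 * (α * σ) ^ 2 := by
      nlinarith [pow_le_pow_left₀ hbpos.le hbu 2]
    have s1 : α / (2 * r₂) / (10 * (α * σ) ^ 2) ≤ ξ₂ / (10 * (ξ₁ + ξ₂) ^ 2) :=
      div_le_div₀ hξ₂pos.le hξ₂l d0 d1
    have s2 := mul_le_mul_of_nonneg_left (s1.trans hD1l) h8
    have e : 8 * π * α * (α / (2 * r₂) / (10 * (α * σ) ^ 2)) = 2 * π / (5 * r₂ * σ ^ 2) := by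
      field_simp; ring
    rw [e] at s2; exact s2
  have hBl : 2 * π / (5 * r₁ * σ ^ 2) ≤ 8 * π * α * D2 := by
    have d0 : 0 < 10 * (ξ₁ + ξ₂) ^ 2 := by
      have := pow_pos hbpos 2; linarith
    have d1 : 10 * (ξ₁ + ξ₂) ^ 2 ≤ 10 * (α * σ) ^ 2 := by
      nlinarith [pow_le_pow_left₀ hbpos.le hbu 2]
    have s1 : α / (2 * r₁) / (10 * (α * σ) ^ 2) ≤ ξ₁ / (10 * (ξ₁ + ξ₂) ^ 2) :=
      div_le_div₀ hξ₁pos.le hξ₁l d0 d1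
    have s2 := mul_le_mul_of_nonneg_left (s1.trans hD2l) h8
    have e : 8 * π * α * (α / (2 * r₁) / (10 * (α * σ) ^ 2)) = 2 * π / (5 * r₁ * σ ^ 2) := by
      field_simp; ring
    rw [e] at s2; exact s2
  have hAu : 8 * π * α * D1 ≤ 32 * π * r₁ := by
    have u0 : 0 < α / (2 * r₁) := div_pos hα0 (by linarith)
    have u1 : 2 / ξ₁ ≤ 2 / (α / (2 * r₁)) :=
      div_le_div_of_nonneg_left (by norm_num) u0 hξ₁l
    have s2 := mul_le_mul_of_nonneg_left (hD1u.trans u1) h8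
    have e : 8 * π * α * (2 / (α / (2 * r₁))) = 32 * π * r₁ := by
      field_simp; ring
    rw [e] at s2; exact s2
  have hBu : 8 * π * α * D2 ≤ 32 * π * r₂ := by
    have u0 : 0 < α / (2 * r₂) := div_pos hα0 (by linarith)
    have u1 : 2 / ξ₂ ≤ 2 / (α / (2 * r₂)) :=
      div_le_div_of_nonneg_left (by norm_num) u0 hξ₂l
    have s2 := mul_le_mul_of_nonneg_left (hD2u.trans u1) h8
    have e : 8 * π * α * (2 / (α / (2 * r₂))) = 32 * π * r₂ := by
      field_simp; ring
    rw [e] at s2; exact s2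
  set S := 8 * π * α * T0 with hSdef
  set A := 8 * π * α * D1 with hAdef
  set B := 8 * π * α * D2 with hBdef
  set k₁ := myk r₁ with hk₁def
  set k₂ := myk r₂ with hk₂def
  have hk₁pos : 0 < k₁ := by
    rw [hk₁def, myk]
    exact div_pos (by norm_num) (mul_pos (mul_pos (by norm_num) hπ) (pow_pos hr₁ 3))
  have hk₂pos : 0 < k₂ := by
    rw [hk₂def, myk]
    exact div_pos (by norm_num) (mul_pos (mul_pos (by norm_num) hπ) (pow_pos hr₂ 3))
  -- capacitance identities
  have hCt11 : Ct11 r₁ r₂ ε = k₁ * (S + A) := by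
    have h0 : Ct11 r₁ r₂ ε = k₁ * (8 * π * α *
        (∑' n : ℕ, Real.exp ((2 * n + 1) * ξ₂) /
          (Real.exp ((2 * n + 1) * (ξ₁ + ξ₂)) - 1))) := rfl
    rw [h0, hU1, hSdef, hAdef]; ring
  have hCt22 : Ct22 r₁ r₂ ε = k₂ * (S + B) := by
    have h0 : Ct22 r₁ r₂ ε = k₂ * (8 * π * α *
        (∑' n : ℕ, Real.exp ((2 * n + 1) * ξ₁) /
          (Real.exp ((2 * n + 1) * (ξ₁ + ξ₂)) - 1))) := rfl
    rw [h0, hU2, hSdef, hBdef]; ring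
  have hCt12 : Ct12 r₁ r₂ ε = -(k₁ * S) := by
    have h0 : Ct12 r₁ r₂ ε = k₁ * (-(8 * π * α * T0)) := rfl
    rw [h0, hSdef]; ring
  have hCt21 : Ct21 r₁ r₂ ε = -(k₂ * S) := by
    have h0 : Ct21 r₁ r₂ ε = k₂ * (-(8 * π * α * T0)) := rfl
    rw [h0, hSdef]; ring
  -- constants
  have hc₂pos : (0:ℝ) < 2 * π / (5 * r₂ * σ ^ 2) :=
    div_pos (by positivity) (mul_pos (mul_pos (by norm_num) hr₂) (pow_pos hσpos 2))
  have hc₁pos : (0:ℝ) < 2 * π / (5 * r₁ * σ ^ 2) :=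
    div_pos (by positivity) (mul_pos (mul_pos (by norm_num) hr₁) (pow_pos hσpos 2))
  have hSm_pos : (0:ℝ) < 4 * π / σ := div_pos (by positivity) hσpos
  have hmym : mym r₁ r₂ = k₁ * k₂ *
      (min (2 * π / (5 * r₂ * σ ^ 2)) (2 * π / (5 * r₁ * σ ^ 2))) ^ 2 /
      ((k₁ + k₂) * max (32 * π * r₁) (32 * π * r₂)) := rfl
  have hmyM : myM r₁ r₂ = 2 * k₁ * k₂ / (k₁ + k₂) *
      (32 * π * r₁ + 32 * π * r₂ + 32 * π * r₁ * (32 * π * r₂) / (4 * π / σ)) := rfl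
  have hlam : lam1 r₁ r₂ ε = 1 / 2 * (Ct11 r₁ r₂ ε + Ct22 r₁ r₂ ε -
      Real.sqrt ((Ct11 r₁ r₂ ε - Ct22 r₁ r₂ ε) ^ 2
        + 4 * Ct12 r₁ r₂ ε * Ct21 r₁ r₂ ε)) := rfl
  have hkey := my_core (Cmax := max (32 * π * r₁) (32 * π * r₂))
    hk₁pos hk₂pos (lt_min hc₂pos hc₁pos) hSm_pos hSl
    ((min_le_left _ _).trans hAl) hAu ((min_le_right _ _).trans hBl) hBu
    (le_max_left _ _) (le_max_right _ _) hCt11 hCt22 hCt12 hCt21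
  rw [hmym, hmyM, hlam]
  have hfix : 4 * Ct12 r₁ r₂ ε * Ct21 r₁ r₂ ε = 4 * (Ct12 r₁ r₂ ε) * Ct21 r₁ r₂ ε := rfl
  exact hkey

set_option maxHeartbeats 800000 in
theorem lam1_bounded_above_below (r₁ r₂ : ℝ) (hr₁ : 0 < r₁) (hr₂ : 0 < r₂) :
    ∃ m M ε₀ : ℝ, 0 < m ∧ m ≤ M ∧ 0 < ε₀ ∧
      ∀ ε : ℝ, 0 < ε → ε < ε₀ → m ≤ lam1 r₁ r₂ ε ∧ lam1 r₁ r₂ ε ≤ M := by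
  have hπ := Real.pi_pos
  have hrr : (0:ℝ) < r₁ + r₂ := by linarith
  set ε₀ := min (min r₁ r₂) (r₁ * r₂ / (27 * (r₁ + r₂))) with hε₀def
  have hε₀pos : 0 < ε₀ :=
    lt_min (lt_min hr₁ hr₂) (div_pos (mul_pos hr₁ hr₂) (by linarith))
  have hkey : ∀ ε : ℝ, 0 < ε → ε < ε₀ →
      mym r₁ r₂ ≤ lam1 r₁ r₂ ε ∧ lam1 r₁ r₂ ε ≤ myM r₁ r₂ := by
    intro ε hε hεlt
    have hε1 : ε < r₁ := lt_of_lt_of_le hεlt ((min_le_left _ _).trans (min_le_left _ _))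
    have hε2 : ε < r₂ := lt_of_lt_of_le hεlt ((min_le_left _ _).trans (min_le_right _ _))
    have hε3 : ε ≤ r₁ * r₂ / (27 * (r₁ + r₂)) := (lt_of_lt_of_le hεlt (min_le_right _ _)).le
    have hP : 0 < ε * (2 * r₁ + ε) * (2 * r₂ + ε) * (2 * r₁ + 2 * r₂ + ε) :=
      mul_pos (mul_pos (mul_pos hε (by linarith)) (by linarith)) (by linarith)
    have h0 : alphaBi r₁ r₂ ε =
        Real.sqrt (ε * (2 * r₁ + ε) * (2 * r₂ + ε) * (2 * r₁ + 2 * r₂ + ε)) /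
          (2 * (r₁ + r₂ + ε)) := rfl
    have hα0 : 0 < alphaBi r₁ r₂ ε := by
      rw [h0]
      exact div_pos (Real.sqrt_pos.mpr hP) (by linarith)
    have hαδ : alphaBi r₁ r₂ ε ≤ r₁ * r₂ / (2 * (r₁ + r₂)) := by
      have key27 : ε * (27 * (r₁ + r₂)) ≤ r₁ * r₂ := by
        have e : r₁ * r₂ / (27 * (r₁ + r₂)) * (27 * (r₁ + r₂)) = r₁ * r₂ := by
          field_simp
        nlinarith [mul_le_mul_of_nonneg_right hε3
          (show (0:ℝ) ≤ 27 * (r₁ + r₂) by linarith)]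
      have t1 : ε * (2 * r₁ + ε) ≤ ε * (3 * r₁) :=
        mul_le_mul_of_nonneg_left (by linarith) hε.le
      have t2 : ε * (2 * r₁ + ε) * (2 * r₂ + ε) ≤ ε * (3 * r₁) * (3 * r₂) := by
        calc ε * (2 * r₁ + ε) * (2 * r₂ + ε) ≤ ε * (3 * r₁) * (2 * r₂ + ε) :=
              mul_le_mul_of_nonneg_right t1 (by linarith)
          _ ≤ ε * (3 * r₁) * (3 * r₂) :=
              mul_le_mul_of_nonneg_left (by linarith) (by nlinarith)
      have t3 : ε * (2 * r₁ + ε) * (2 * r₂ + ε) * (2 * r₁ + 2 * r₂ + ε)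
          ≤ ε * (3 * r₁) * (3 * r₂) * (3 * (r₁ + r₂)) := by
        calc ε * (2 * r₁ + ε) * (2 * r₂ + ε) * (2 * r₁ + 2 * r₂ + ε)
            ≤ ε * (3 * r₁) * (3 * r₂) * (2 * r₁ + 2 * r₂ + ε) :=
              mul_le_mul_of_nonneg_right t2 (by linarith)
          _ ≤ ε * (3 * r₁) * (3 * r₂) * (3 * (r₁ + r₂)) :=
              mul_le_mul_of_nonneg_left (by linarith) (by nlinarith)
      have hP2 : ε * (2 * r₁ + ε) * (2 * r₂ + ε) * (2 * r₁ + 2 * r₂ + ε)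
          ≤ (r₁ * r₂) ^ 2 := by
        nlinarith [mul_le_mul_of_nonneg_right key27 (mul_pos hr₁ hr₂).le]
      have hsq : Real.sqrt (ε * (2 * r₁ + ε) * (2 * r₂ + ε) * (2 * r₁ + 2 * r₂ + ε))
          ≤ r₁ * r₂ := by
        have h := Real.sqrt_le_sqrt hP2
        rwa [Real.sqrt_sq (mul_pos hr₁ hr₂).le] at h
      rw [h0]
      exact div_le_div₀ (mul_pos hr₁ hr₂).le hsq (by linarith) (by linarith)
    exact my_key r₁ r₂ hr₁ hr₂ ε hα0 hαδ
  have hk1 : 0 < myk r₁ := by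
    have h : myk r₁ = 3 / (4 * π * r₁ ^ 3) := rfl
    rw [h]
    exact div_pos (by norm_num) (mul_pos (mul_pos (by norm_num) hπ) (pow_pos hr₁ 3))
  have hk2 : 0 < myk r₂ := by
    have h : myk r₂ = 3 / (4 * π * r₂ ^ 3) := rfl
    rw [h]
    exact div_pos (by norm_num) (mul_pos (mul_pos (by norm_num) hπ) (pow_pos hr₂ 3))
  have hσpos : (0:ℝ) < 1 / r₁ + 1 / r₂ :=
    add_pos (one_div_pos.mpr hr₁) (one_div_pos.mpr hr₂)
  have hcmin_pos : 0 < mycmin r₁ r₂ := by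
    have h : mycmin r₁ r₂ = min (2 * π / (5 * r₂ * (1 / r₁ + 1 / r₂) ^ 2))
        (2 * π / (5 * r₁ * (1 / r₁ + 1 / r₂) ^ 2)) := rfl
    rw [h]
    exact lt_min
      (div_pos (by positivity) (mul_pos (mul_pos (by norm_num) hr₂) (pow_pos hσpos 2)))
      (div_pos (by positivity) (mul_pos (mul_pos (by norm_num) hr₁) (pow_pos hσpos 2)))
  have hCmax_pos : 0 < myCmax r₁ r₂ := by
    have h : myCmax r₁ r₂ = max (32 * π * r₁) (32 * π * r₂) := rfl
    rw [h]
    exact lt_of_lt_of_le (mul_pos (mul_pos (by norm_num) hπ) hr₁) (le_max_left _ _)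
  have hm_pos : 0 < mym r₁ r₂ := by
    have h : mym r₁ r₂ = myk r₁ * myk r₂ * mycmin r₁ r₂ ^ 2 /
        ((myk r₁ + myk r₂) * myCmax r₁ r₂) := rfl
    rw [h]
    exact div_pos (mul_pos (mul_pos hk1 hk2) (pow_pos hcmin_pos 2))
      (mul_pos (add_pos hk1 hk2) hCmax_pos)
  have hmid := hkey (ε₀ / 2) (by linarith) (by linarith)
  exact ⟨mym r₁ r₂, myM r₁ r₂, ε₀, hm_pos, hmid.1.trans hmid.2, hε₀pos, hkey⟩
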